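/- Let Γ be a subgroup of SL(2,ℝ) that is discrete, i.e. the subspace topology induced on Γ from SL(2,ℝ) is the discrete topology. If A and B are elements of Γ that are hyperbolic (|tr A| > 2 and |tr B| > 2) and there exists a nonzero vector v ∈ ℝ² that is an eigenvector of both A and B, then A and B commute: A·B = B·A. (Equivalently, two hyperbolic elements of a discrete subgroup of SL(2,ℝ) that share one fixed point on the circle at infinity must share both fixed points; this is the corrected form of the step in the proof of Theorem 1 where two boundary maps of hyperbolic isometries having exactly one fixed point in common is shown to contradict discreteness.) -/

import Mathlib

open Matrix

/-- trace relation for a 2x2 det-1 matrix with eigenvector. -/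
lemma aux_trace_eq (M : Matrix (Fin 2) (Fin 2) ℝ) (hdet : M.det = 1)
    (v : Fin 2 → ℝ) (hv : v ≠ 0) (a : ℝ) (h : M.mulVec v = a • v) :
    a * M.trace = a ^ 2 + 1 := by
  have hE1 : M 0 0 * v 0 + M 0 1 * v 1 = a * v 0 := by
    have := congrFun h 0
    simpa [Matrix.mulVec, dotProduct, Fin.sum_univ_two] using this
  have hE2 : M 1 0 * v 0 + M 1 1 * v 1 = a * v 1 := by
    have := congrFun h 1
    simpa [Matrix.mulVec, dotProduct, Fin.sum_univ_two] using this
  have hD : M 0 0 * M 1 1 - M 0 1 * M 1 0 = 1 := by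
    rw [Matrix.det_fin_two] at hdet; linarith
  have hY : a * (v 0 * M 1 1 - v 1 * M 0 1) = v 0 := by
    linear_combination v 0 * hD - M 1 1 * hE1 + M 0 1 * hE2
  have hX : a * (v 0 * M 1 0 - v 1 * M 0 0) = - v 1 := by
    linear_combination M 0 0 * hE2 - M 1 0 * hE1 - v 1 * hD
  rw [Matrix.trace_fin_two]
  rcases (by
    by_contra hc
    push_neg at hc
    exact hv (funext fun i => by fin_cases i <;> simp [hc.1, hc.2]) :
    v 0 ≠ 0 ∨ v 1 ≠ 0) with h0 | h1
  · have : (a * (M 0 0 + M 1 1)) * v 0 = (a ^ 2 + 1) * v 0 := by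
      linear_combination a * hE1 + hY
    exact mul_right_cancel₀ h0 this
  · have : (a * (M 0 0 + M 1 1)) * v 1 = (a ^ 2 + 1) * v 1 := by
      linear_combination a * hE2 - hX
    exact mul_right_cancel₀ h1 this

/-- A traceless 2x2 matrix killing a nonzero vector v is v ⬝ wᵀ with w ⊥ v. -/
lemma aux_decomp (N : Matrix (Fin 2) (Fin 2) ℝ) (v : Fin 2 → ℝ) (hv : v ≠ 0)
    (hNv : N.mulVec v = 0) (htr : N 0 0 + N 1 1 = 0) :
    ∃ w : Fin 2 → ℝ, (∀ i j, N i j = v i * w j) ∧ w 0 * v 0 + w 1 * v 1 = 0 := by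
  have hE1 : N 0 0 * v 0 + N 0 1 * v 1 = 0 := by
    have := congrFun hNv 0
    simpa [Matrix.mulVec, dotProduct, Fin.sum_univ_two] using this
  have hE2 : N 1 0 * v 0 + N 1 1 * v 1 = 0 := by
    have := congrFun hNv 1
    simpa [Matrix.mulVec, dotProduct, Fin.sum_univ_two] using this
  rcases (by
    by_contra hc
    push_neg at hc
    exact hv (funext fun i => by fin_cases i <;> simp [hc.1, hc.2]) :
    v 0 ≠ 0 ∨ v 1 ≠ 0) with h0 | h1
  · refine ⟨fun j => N 0 j / v 0, fun i j => ?_, by field_simp; linarith⟩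
    fin_cases i <;> fin_cases j <;> simp only [Fin.zero_eta, Fin.mk_one, Fin.isValue]
    · field_simp
    · field_simp
    · field_simp; linear_combination hE2 - v 1 * htr
    · field_simp; linear_combination v 0 * htr - hE1
  · refine ⟨fun j => N 1 j / v 1, fun i j => ?_, by field_simp; linarith⟩
    fin_cases i <;> fin_cases j <;> simp only [Fin.zero_eta, Fin.mk_one, Fin.isValue]
    · field_simp; linear_combination v 1 * htr - hE2
    · field_simp; linear_combination hE1 - v 0 * htr
    · field_simp
    · field_simp

/-- Conjugation of the rank-one nilpotent by the hyperbolic element scales it. -/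
lemma aux_conj (A N : Matrix (Fin 2) (Fin 2) ℝ) (v w : Fin 2 → ℝ) (a : ℝ)
    (ha0 : a ≠ 0) (hv : v ≠ 0) (hdet : A.det = 1) (hE : A.mulVec v = a • v)
    (hN : ∀ i j, N i j = v i * w j) (hO : w 0 * v 0 + w 1 * v 1 = 0) :
    A * N = a • N ∧ N * A = a⁻¹ • N := by
  have hE1 : A 0 0 * v 0 + A 0 1 * v 1 = a * v 0 := by
    have := congrFun hE 0
    simpa [Matrix.mulVec, dotProduct, Fin.sum_univ_two] using this
  have hE2 : A 1 0 * v 0 + A 1 1 * v 1 = a * v 1 := by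
    have := congrFun hE 1
    simpa [Matrix.mulVec, dotProduct, Fin.sum_univ_two] using this
  have hD : A 0 0 * A 1 1 - A 0 1 * A 1 0 = 1 := by
    rw [Matrix.det_fin_two] at hdet; linarith
  have hY : a * (v 0 * A 1 1 - v 1 * A 0 1) = v 0 := by
    linear_combination v 0 * hD - A 1 1 * hE1 + A 0 1 * hE2
  have hX : a * (v 0 * A 1 0 - v 1 * A 0 0) = - v 1 := by
    linear_combination A 0 0 * hE2 - A 1 0 * hE1 - v 1 * hD
  have hvc : v 0 ≠ 0 ∨ v 1 ≠ 0 := by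
    by_contra hc
    push_neg at hc
    exact hv (funext fun i => by fin_cases i <;> simp [hc.1, hc.2])
  -- left eigenvector relations
  have hw0 : a * (w 0 * A 0 0 + w 1 * A 1 0) = w 0 := by
    rcases hvc with h0 | h1
    · have : (a * (w 0 * A 0 0 + w 1 * A 1 0)) * v 0 = w 0 * v 0 := by
        linear_combination (a * A 0 0 - 1) * hO + w 1 * hX
      exact mul_right_cancel₀ h0 this
    · have : (a * (w 0 * A 0 0 + w 1 * A 1 0)) * v 1 = w 0 * v 1 := by
        linear_combination a * A 1 0 * hO - w 0 * hX
      exact mul_right_cancel₀ h1 this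
  have hw1 : a * (w 0 * A 0 1 + w 1 * A 1 1) = w 1 := by
    rcases hvc with h0 | h1
    · have : (a * (w 0 * A 0 1 + w 1 * A 1 1)) * v 0 = w 1 * v 0 := by
        linear_combination a * A 0 1 * hO + w 1 * hY
      exact mul_right_cancel₀ h0 this
    · have : (a * (w 0 * A 0 1 + w 1 * A 1 1)) * v 1 = w 1 * v 1 := by
        linear_combination (a * A 1 1 - 1) * hO - w 0 * hY
      exact mul_right_cancel₀ h1 this
  constructor
  · ext i j
    fin_cases i <;> fin_cases j <;>
      simp only [Fin.zero_eta, Fin.mk_one, Fin.isValue, Matrix.mul_apply,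
        Fin.sum_univ_two, Matrix.smul_apply, smul_eq_mul, hN]
    · linear_combination w 0 * hE1
    · linear_combination w 1 * hE1
    · linear_combination w 0 * hE2
    · linear_combination w 1 * hE2
  · ext i j
    fin_cases i <;> fin_cases j <;>
      (simp only [Fin.zero_eta, Fin.mk_one, Fin.isValue, Matrix.mul_apply,
        Fin.sum_univ_two, Matrix.smul_apply, smul_eq_mul, hN]
       rw [inv_mul_eq_div, eq_div_iff ha0])
    · linear_combination v 0 * hw0
    · linear_combination v 0 * hw1
    · linear_combination v 1 * hw0
    · linear_combination v 1 * hw1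



/-- SL(2,ℝ) with the topology induced from the space of 2×2 real matrices. -/
instance : TopologicalSpace (Matrix.SpecialLinearGroup (Fin 2) ℝ) :=
  TopologicalSpace.induced
    (fun A => (A : Matrix (Fin 2) (Fin 2) ℝ)) inferInstance

/-- Two hyperbolic elements of a discrete subgroup of SL(2,ℝ) sharing a common
eigenvector (i.e. a common fixed point on the circle at infinity) commute. -/
theorem stmt_0 (Γ : Subgroup (Matrix.SpecialLinearGroup (Fin 2) ℝ))
    (hΓ : DiscreteTopology Γ)
    (A B : Matrix.SpecialLinearGroup (Fin 2) ℝ) (hA : A ∈ Γ) (hB : B ∈ Γ)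
    (hAhyp : |Matrix.trace (A : Matrix (Fin 2) (Fin 2) ℝ)| > 2)
    (hBhyp : |Matrix.trace (B : Matrix (Fin 2) (Fin 2) ℝ)| > 2)
    (v : Fin 2 → ℝ) (hv : v ≠ 0)
    (hvA : ∃ a : ℝ, (A : Matrix (Fin 2) (Fin 2) ℝ).mulVec v = a • v)
    (hvB : ∃ b : ℝ, (B : Matrix (Fin 2) (Fin 2) ℝ).mulVec v = b • v) :
    A * B = B * A := by
  obtain ⟨a, ha⟩ := hvA
  obtain ⟨b, hb⟩ := hvB
  have hdetA : ((A : Matrix (Fin 2) (Fin 2) ℝ)).det = 1 :=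
    Matrix.SpecialLinearGroup.det_coe A
  have hdetB : ((B : Matrix (Fin 2) (Fin 2) ℝ)).det = 1 :=
    Matrix.SpecialLinearGroup.det_coe B
  have htrA := aux_trace_eq _ hdetA v hv a ha
  have htrB := aux_trace_eq _ hdetB v hv b hb
  have ha0 : a ≠ 0 := by
    rintro rfl; rw [zero_mul] at htrA; nlinarith
  have hb0 : b ≠ 0 := by
    rintro rfl; rw [zero_mul] at htrB; nlinarith
  have ha1 : a ^ 2 ≠ 1 := by
    intro h1
    rcases mul_eq_zero.mp (show (a - 1) * (a + 1) = 0 by linear_combination h1) with h | h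
    · have hae : a = 1 := by linarith
      subst hae
      have : Matrix.trace (A : Matrix (Fin 2) (Fin 2) ℝ) = 2 := by linarith
      rw [this, abs_two] at hAhyp
      exact lt_irrefl _ hAhyp
    · have hae : a = -1 := by linarith
      subst hae
      have : Matrix.trace (A : Matrix (Fin 2) (Fin 2) ℝ) = -2 := by nlinarith
      rw [this, abs_neg, abs_two] at hAhyp
      exact lt_irrefl _ hAhyp
  -- eigenvector relation for the inverses
  have hAi : ((A⁻¹ : Matrix.SpecialLinearGroup (Fin 2) ℝ) : Matrix (Fin 2) (Fin 2) ℝ).mulVec v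
      = a⁻¹ • v := by
    have h1 : ((A⁻¹ : Matrix.SpecialLinearGroup (Fin 2) ℝ) : Matrix (Fin 2) (Fin 2) ℝ) *
        (A : Matrix (Fin 2) (Fin 2) ℝ) = 1 := by
      rw [← Matrix.SpecialLinearGroup.coe_mul, inv_mul_cancel A,
        Matrix.SpecialLinearGroup.coe_one]
    have h2 : ((A⁻¹ : Matrix.SpecialLinearGroup (Fin 2) ℝ) : Matrix (Fin 2) (Fin 2) ℝ).mulVec
        ((A : Matrix (Fin 2) (Fin 2) ℝ).mulVec v) = v := by
      rw [Matrix.mulVec_mulVec, h1, Matrix.one_mulVec]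
    rw [ha, Matrix.mulVec_smul] at h2
    calc ((A⁻¹ : Matrix.SpecialLinearGroup (Fin 2) ℝ) : Matrix (Fin 2) (Fin 2) ℝ).mulVec v
        = a⁻¹ • (a • ((A⁻¹ : Matrix.SpecialLinearGroup (Fin 2) ℝ) :
            Matrix (Fin 2) (Fin 2) ℝ).mulVec v) := by
          rw [smul_smul, inv_mul_cancel₀ ha0, one_smul]
      _ = a⁻¹ • v := by rw [h2]
  have hBi : ((B⁻¹ : Matrix.SpecialLinearGroup (Fin 2) ℝ) : Matrix (Fin 2) (Fin 2) ℝ).mulVec v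
      = b⁻¹ • v := by
    have h1 : ((B⁻¹ : Matrix.SpecialLinearGroup (Fin 2) ℝ) : Matrix (Fin 2) (Fin 2) ℝ) *
        (B : Matrix (Fin 2) (Fin 2) ℝ) = 1 := by
      rw [← Matrix.SpecialLinearGroup.coe_mul, inv_mul_cancel B,
        Matrix.SpecialLinearGroup.coe_one]
    have h2 : ((B⁻¹ : Matrix.SpecialLinearGroup (Fin 2) ℝ) : Matrix (Fin 2) (Fin 2) ℝ).mulVec
        ((B : Matrix (Fin 2) (Fin 2) ℝ).mulVec v) = v := by
      rw [Matrix.mulVec_mulVec, h1, Matrix.one_mulVec]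
    rw [hb, Matrix.mulVec_smul] at h2
    calc ((B⁻¹ : Matrix.SpecialLinearGroup (Fin 2) ℝ) : Matrix (Fin 2) (Fin 2) ℝ).mulVec v
        = b⁻¹ • (b • ((B⁻¹ : Matrix.SpecialLinearGroup (Fin 2) ℝ) :
            Matrix (Fin 2) (Fin 2) ℝ).mulVec v) := by
          rw [smul_smul, inv_mul_cancel₀ hb0, one_smul]
      _ = b⁻¹ • v := by rw [h2]
  -- the commutator
  set C : Matrix.SpecialLinearGroup (Fin 2) ℝ := A * B * A⁻¹ * B⁻¹ with hCdef
  have hCmem : C ∈ Γ :=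
    mul_mem (mul_mem (mul_mem hA hB) (inv_mem hA)) (inv_mem hB)
  set K : Matrix (Fin 2) (Fin 2) ℝ := ((C : Matrix (Fin 2) (Fin 2) ℝ)) with hKdef
  have hK : K.mulVec v = v := by
    rw [hKdef, hCdef]
    simp only [Matrix.SpecialLinearGroup.coe_mul, ← Matrix.mulVec_mulVec]
    rw [hBi]
    simp only [Matrix.mulVec_smul]
    rw [hAi]
    simp only [Matrix.mulVec_smul]
    rw [hb]
    simp only [Matrix.mulVec_smul]
    rw [ha]
    simp only [smul_smul]
    rw [show b⁻¹ * (a⁻¹ * (b * a)) = 1 by field_simp, one_smul]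
  have hdetK : K.det = 1 := Matrix.SpecialLinearGroup.det_coe C
  have htrK := aux_trace_eq K hdetK v hv 1 (by rw [hK, one_smul])
  set N : Matrix (Fin 2) (Fin 2) ℝ := K - 1 with hNdef
  have hKN : K = 1 + N := by rw [hNdef]; abel
  have hNv : N.mulVec v = 0 := by
    rw [hNdef, Matrix.sub_mulVec, hK, Matrix.one_mulVec, sub_self]
  have htrN : N 0 0 + N 1 1 = 0 := by
    have h2 : K.trace = 2 := by nlinarith
    rw [Matrix.trace_fin_two] at h2
    have e0 : N 0 0 = K 0 0 - 1 := by rw [hNdef]; simp [Matrix.sub_apply, Matrix.one_apply]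
    have e1 : N 1 1 = K 1 1 - 1 := by rw [hNdef]; simp [Matrix.sub_apply, Matrix.one_apply]
    rw [e0, e1]; linarith
  obtain ⟨w, hNw, hO⟩ := aux_decomp N v hv hNv htrN
  obtain ⟨hAN, hNA⟩ := aux_conj _ N v w a ha0 hv hdetA ha hNw hO
  obtain ⟨hAiN, hNAi⟩ := aux_conj _ N v w a⁻¹ (inv_ne_zero ha0) hv
    (Matrix.SpecialLinearGroup.det_coe A⁻¹) hAi hNw hO
  rw [inv_inv] at hNAi
  -- choose the contracting direction
  obtain ⟨D, u, hDmem, hu, hconj⟩ :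
      ∃ (D : Matrix.SpecialLinearGroup (Fin 2) ℝ) (u : ℝ), D ∈ Γ ∧ |u| < 1 ∧
        (D : Matrix (Fin 2) (Fin 2) ℝ) * N *
          ((D⁻¹ : Matrix.SpecialLinearGroup (Fin 2) ℝ) : Matrix (Fin 2) (Fin 2) ℝ)
          = u • N := by
    rcases lt_or_gt_of_ne ha1 with hlt | hgt
    · refine ⟨A, a ^ 2, hA, by rwa [abs_of_pos (by positivity)], ?_⟩
      rw [hAN, Matrix.smul_mul, hNAi, smul_smul, sq]
    · refine ⟨A⁻¹, (a⁻¹) ^ 2, inv_mem hA, ?_, ?_⟩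
      · rw [abs_of_pos (by positivity), inv_pow]
        exact inv_lt_one_of_one_lt₀ hgt
      · rw [inv_inv, hAiN, Matrix.smul_mul, hNA, smul_smul, sq]
  -- the sequence of conjugates
  have hDDi : (D : Matrix (Fin 2) (Fin 2) ℝ) *
      ((D⁻¹ : Matrix.SpecialLinearGroup (Fin 2) ℝ) : Matrix (Fin 2) (Fin 2) ℝ) = 1 := by
    rw [← Matrix.SpecialLinearGroup.coe_mul, mul_inv_cancel D,
      Matrix.SpecialLinearGroup.coe_one]
  have hpow : ∀ n : ℕ,
      (((D ^ n * C * (D⁻¹) ^ n : Matrix.SpecialLinearGroup (Fin 2) ℝ) :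
        Matrix (Fin 2) (Fin 2) ℝ)) = 1 + u ^ n • N := by
    intro n
    induction n with
    | zero => simpa using hKN
    | succ n ih =>
      have hgp : D ^ (n + 1) * C * (D⁻¹) ^ (n + 1)
          = D * (D ^ n * C * (D⁻¹) ^ n) * D⁻¹ := by group
      rw [hgp, Matrix.SpecialLinearGroup.coe_mul, Matrix.SpecialLinearGroup.coe_mul, ih]
      rw [mul_add, add_mul, mul_one, hDDi, Matrix.mul_smul, Matrix.smul_mul, hconj,
        smul_smul, ← pow_succ]
  -- convergence to the identity
  have hlim : Filter.Tendsto (fun n : ℕ => (1 : Matrix (Fin 2) (Fin 2) ℝ) + u ^ n • N)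
      Filter.atTop (nhds 1) := by
    have h0 : Filter.Tendsto (fun n : ℕ => u ^ n) Filter.atTop (nhds 0) :=
      tendsto_pow_atTop_nhds_zero_of_abs_lt_one hu
    have hcont : Continuous fun c : ℝ => (1 : Matrix (Fin 2) (Fin 2) ℝ) + c • N :=
      continuous_const.add (continuous_id.smul continuous_const)
    have := (hcont.tendsto 0).comp h0
    simpa [Function.comp_def] using this
  -- discreteness: the singleton of the identity is open
  have hopen : IsOpen {(1 : Γ)} := isOpen_discrete _
  obtain ⟨U, hU, hU1⟩ := isOpen_induced_iff.mp hopen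
  obtain ⟨V, hV, hV1⟩ := isOpen_induced_iff.mp hU
  have h1V : (1 : Matrix (Fin 2) (Fin 2) ℝ) ∈ V := by
    have h1U : (1 : Matrix.SpecialLinearGroup (Fin 2) ℝ) ∈ U := by
      have : ((1 : Γ) : Matrix.SpecialLinearGroup (Fin 2) ℝ) ∈ U := by
        have : (1 : Γ) ∈ (Subtype.val ⁻¹' U : Set Γ) := by rw [hU1]; rfl
        exact this
      simpa using this
    rw [← hV1] at h1U
    simpa [Matrix.SpecialLinearGroup.coe_one] using h1U
  have hev : ∀ᶠ n in Filter.atTop,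
      ((1 : Matrix (Fin 2) (Fin 2) ℝ) + u ^ n • N) ∈ V :=
    hlim (hV.mem_nhds h1V)
  obtain ⟨n, hn⟩ := hev.exists
  -- the n-th conjugate lies in the open set, hence equals 1
  have hγmem : (D ^ n * C * (D⁻¹) ^ n : Matrix.SpecialLinearGroup (Fin 2) ℝ) ∈ Γ :=
    mul_mem (mul_mem (pow_mem hDmem n) hCmem) (pow_mem (inv_mem hDmem) n)
  have hγ1 : (⟨D ^ n * C * (D⁻¹) ^ n, hγmem⟩ : Γ) = 1 := by
    have hmemU : (D ^ n * C * (D⁻¹) ^ n : Matrix.SpecialLinearGroup (Fin 2) ℝ) ∈ U := by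
      rw [← hV1]
      show ((D ^ n * C * (D⁻¹) ^ n : Matrix.SpecialLinearGroup (Fin 2) ℝ) :
        Matrix (Fin 2) (Fin 2) ℝ) ∈ V
      rw [hpow n]
      exact hn
    have : (⟨D ^ n * C * (D⁻¹) ^ n, hγmem⟩ : Γ) ∈ (Subtype.val ⁻¹' U : Set Γ) := hmemU
    rw [hU1] at this
    exact this
  have hC1 : C = 1 := by
    have hval : D ^ n * C * (D⁻¹) ^ n = 1 := by
      have := congrArg (Subtype.val) hγ1
      simpa using this
    calc C = (D ^ n)⁻¹ * (D ^ n * C * (D⁻¹) ^ n) * D ^ n := by group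
      _ = (D ^ n)⁻¹ * 1 * D ^ n := by rw [hval]
      _ = 1 := by group
  -- conclude
  rw [hCdef] at hC1
  calc A * B = (A * B * A⁻¹ * B⁻¹) * (B * A) := by group
    _ = 1 * (B * A) := by rw [hC1]
    _ = B * A := one_mul _
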